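/- Let G be a connected locally finite simple graph and let x and y be adjacent vertices with d(x) ≤ d(y). Then for every coupling σ between the mass distributions μ_x and μ_y, the Lin–Lu–Yau curvature satisfies κ(x,y) ≥ 1 + 1/d(y) − C(σ)/L, where L = lcm(d(x), d(y)) and C(σ) is the transportation cost of σ. -/

import Mathlib

open scoped BigOperators

namespace LLY

variable {V : Type*}

/-- Degree of a vertex (as `Nat.card` of its neighbor set; agrees with the usual
degree in a locally finite graph). -/
noncomputable def deg (G : SimpleGraph V) (u : V) : ℕ := Nat.card (G.neighborSet u)

/-- `G` is locally finite. -/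
def LocFin (G : SimpleGraph V) : Prop := ∀ v : V, (G.neighborSet v).Finite

/-- `f` is 1-Lipschitz with respect to the graph distance of `G`. -/
def Lip1 (G : SimpleGraph V) (f : V → ℝ) : Prop :=
  ∀ a b : V, |f a - f b| ≤ (G.dist a b : ℝ)

/-- The (normalized) graph Laplacian `Δf(u) = (1/d(u)) ∑_{v ∈ N(u)} (f v - f u)`. -/
noncomputable def lap (G : SimpleGraph V) (f : V → ℝ) (u : V) : ℝ :=
  (1 / (deg G u : ℝ)) * ∑ᶠ v ∈ G.neighborSet u, (f v - f u)

/-- The gradient `∇_{xy} f = (f x - f y)/d(x,y)`. -/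
noncomputable def grad (G : SimpleGraph V) (f : V → ℝ) (x y : V) : ℝ :=
  (f x - f y) / (G.dist x y : ℝ)

/-- Lin–Lu–Yau curvature of the pair `{x,y}` (limit-free Münch–Wojciechowski form):
`κ(x,y) = inf { ∇_{xy} Δf : f 1-Lipschitz, ∇_{yx} f = 1 }`. -/
noncomputable def kappa (G : SimpleGraph V) (x y : V) : ℝ :=
  sInf {k : ℝ | ∃ f : V → ℝ, Lip1 G f ∧ grad G f y x = 1 ∧ k = grad G (lap G f) x y}

end LLY

namespace LLY

variable {V : Type*}

/-- `c_x = lcm(d(x),d(y))/d(x)`. -/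
noncomputable def cX (G : SimpleGraph V) (x y : V) : ℕ :=
  Nat.lcm (deg G x) (deg G y) / deg G x

/-- `c_y = lcm(d(x),d(y))/d(y)`. -/
noncomputable def cY (G : SimpleGraph V) (x y : V) : ℕ :=
  Nat.lcm (deg G x) (deg G y) / deg G y

open Classical in
/-- The mass distribution `μ_x`: `c_x - c_y` on `y` and on common neighbors of `x,y`,
`c_x` on `N(x) \ N[y]`, and `0` elsewhere. -/
noncomputable def muX (G : SimpleGraph V) (x y : V) (u : V) : ℤ :=
  if u = y ∨ u ∈ G.neighborSet x ∩ G.neighborSet y then (cX G x y : ℤ) - (cY G x y : ℤ)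
  else if u ∈ G.neighborSet x \ (G.neighborSet y ∪ {y}) then (cX G x y : ℤ)
  else 0

open Classical in
/-- The mass distribution `μ_y`: `c_y` on `N(y) \ N[x]` and `0` elsewhere. -/
noncomputable def muY (G : SimpleGraph V) (x y : V) (u : V) : ℤ :=
  if u ∈ G.neighborSet y \ (G.neighborSet x ∪ {x}) then (cY G x y : ℤ) else 0

/-- `σ` is a coupling between `μ_x` and `μ_y`: a finitely supported, nonnegative,
integer-valued map with the prescribed marginals. -/
def IsCoupling (G : SimpleGraph V) (x y : V) (σ : V × V → ℤ) : Prop :=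
  (Function.support σ).Finite ∧
  (∀ p : V × V, 0 ≤ σ p) ∧
  (∀ z : V, ∑ᶠ v : V, σ (z, v) = muX G x y z) ∧
  (∀ z : V, ∑ᶠ u : V, σ (u, z) = muY G x y z)

/-- The transportation cost `C(σ) = ∑_{u,v} σ(u,v) d(u,v)`. -/
noncomputable def cost (G : SimpleGraph V) (σ : V × V → ℤ) : ℝ :=
  ∑ᶠ p : V × V, (σ p : ℝ) * (G.dist p.1 p.2 : ℝ)

end LLY

set_option maxHeartbeats 1000000 in
open LLY in
/-- For a connected locally finite simple graph `G`, adjacent vertices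
`x, y` with `d(x) ≤ d(y)`, and any coupling `σ` between `μ_x` and `μ_y`,
`κ(x,y) ≥ 1 + 1/d(y) - C(σ)/lcm(d(x),d(y))`. -/
theorem lly_coupling_lower_bound {V : Type*} (G : SimpleGraph V)
    (hconn : G.Connected) (hfin : LocFin G) (x y : V) (hxy : G.Adj x y)
    (hdeg : deg G x ≤ deg G y) (σ : V × V → ℤ) (hσ : IsCoupling G x y σ) :
    kappa G x y ≥
      1 + 1 / (deg G y : ℝ) - cost G σ / (Nat.lcm (deg G x) (deg G y) : ℝ) := by
  classical
  obtain ⟨hσfin, hσpos, hσX, hσY⟩ := hσ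
  have hne : x ≠ y := hxy.ne
  have hyNx : y ∈ G.neighborSet x := hxy
  have hxNy : x ∈ G.neighborSet y := hxy.symm
  have hxx : x ∉ G.neighborSet x := fun h => G.irrefl h
  have hyy : y ∉ G.neighborSet y := fun h => G.irrefl h
  have hd1 : G.dist x y = 1 := SimpleGraph.dist_eq_one_iff_adj.mpr hxy
  have hd1' : G.dist y x = 1 := by rw [SimpleGraph.dist_comm]; exact hd1
  set S : Finset V := (hfin x).toFinset with hSdef
  set T : Finset V := (hfin y).toFinset with hTdef
  have hmemS : ∀ u, u ∈ S ↔ u ∈ G.neighborSet x := fun u => (hfin x).mem_toFinset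
  have hmemT : ∀ u, u ∈ T ↔ u ∈ G.neighborSet y := fun u => (hfin y).mem_toFinset
  have hdxS : deg G x = S.card := Nat.card_eq_card_finite_toFinset (hfin x)
  have hdyT : deg G y = T.card := Nat.card_eq_card_finite_toFinset (hfin y)
  have hdx0 : 0 < deg G x := by
    rw [hdxS]; exact Finset.card_pos.mpr ⟨y, (hmemS y).mpr hyNx⟩
  have hdy0 : 0 < deg G y := by
    rw [hdyT]; exact Finset.card_pos.mpr ⟨x, (hmemT x).mpr hxNy⟩
  set L : ℕ := Nat.lcm (deg G x) (deg G y) with hLdef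
  have hcx : cX G x y * deg G x = L := Nat.div_mul_cancel (Nat.dvd_lcm_left _ _)
  have hcy : cY G x y * deg G y = L := Nat.div_mul_cancel (Nat.dvd_lcm_right _ _)
  have hL0 : 0 < L := Nat.pos_of_ne_zero (Nat.lcm_ne_zero hdx0.ne' hdy0.ne')
  have hL0R : (0:ℝ) < (L:ℝ) := by exact_mod_cast hL0
  have hdxR : ((deg G x : ℕ):ℝ) ≠ 0 := by exact_mod_cast hdx0.ne'
  have hdyR : ((deg G y : ℕ):ℝ) ≠ 0 := by exact_mod_cast hdy0.ne'
  have hcxR : ((cX G x y : ℕ):ℝ) * (deg G x : ℝ) = (L:ℝ) := by exact_mod_cast hcx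
  have hcyR : ((cY G x y : ℕ):ℝ) * (deg G y : ℝ) = (L:ℝ) := by exact_mod_cast hcy
  rw [ge_iff_le]
  unfold kappa
  apply le_csInf
  · refine ⟨_, fun u => (G.dist x u : ℝ), ?_, ?_, rfl⟩
    · intro a b
      have h1 : (G.dist x a : ℝ) ≤ (G.dist x b : ℝ) + (G.dist b a : ℝ) := by
        exact_mod_cast hconn.dist_triangle
      have h2 : (G.dist x b : ℝ) ≤ (G.dist x a : ℝ) + (G.dist a b : ℝ) := by
        exact_mod_cast hconn.dist_triangle
      have h3 : (G.dist b a : ℝ) = (G.dist a b : ℝ) := by rw [SimpleGraph.dist_comm]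
      rw [abs_sub_le_iff]
      constructor <;> linarith
    · simp [grad, hd1, hd1', SimpleGraph.dist_self]
  · rintro k ⟨f, hf, hgrad, rfl⟩
    have hfyx : f y - f x = 1 := by
      have := hgrad
      rw [grad, hd1'] at this
      simpa using this
    have hgoal : grad G (lap G f) x y = lap G f x - lap G f y := by
      rw [grad, hd1]; simp
    rw [hgoal]
    -- Finset forms of the Laplacian
    have hlapx : lap G f x = (1 / (deg G x : ℝ)) * ∑ v ∈ S, (f v - f x) := by
      rw [lap, ← (hfin x).coe_toFinset, finsum_mem_coe_finset]
    have hlapy : lap G f y = (1 / (deg G y : ℝ)) * ∑ v ∈ T, (f v - f y) := by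
      rw [lap, ← (hfin y).coe_toFinset, finsum_mem_coe_finset]
    obtain ⟨g, hgv⟩ : ∃ g : V → ℝ, ∀ v, g v = f v - f y :=
      ⟨fun u => f u - f y, fun _ => rfl⟩
    have hgy : g y = 0 := by rw [hgv]; ring
    have hgx : g x = -1 := by rw [hgv]; linarith
    set U : Finset V := S ∪ T with hUdef
    have hyU : y ∈ U := Finset.mem_union_left _ ((hmemS y).mpr hyNx)
    have hxU : x ∈ U := Finset.mem_union_right _ ((hmemT x).mpr hxNy)
    -- the pointwise identity between indicators and the mass distributions
    have ptwise : ∀ u, ((if u ∈ S then ((cX G x y : ℕ):ℝ) else 0)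
        - (if u ∈ T then ((cY G x y : ℕ):ℝ) else 0))
        = (((muX G x y u : ℤ):ℝ) - ((muY G x y u : ℤ):ℝ))
          + (if u = y then ((cY G x y : ℕ):ℝ) else 0)
          - (if u = x then ((cY G x y : ℕ):ℝ) else 0) := by
      intro u
      by_cases hux : u = x <;> by_cases huy : u = y <;>
        by_cases h1 : u ∈ G.neighborSet x <;> by_cases h2 : u ∈ G.neighborSet y <;>
        simp_all [muX, muY, Set.mem_inter_iff, Set.mem_diff, Set.mem_union,
          Set.mem_singleton_iff, hmemS, hmemT] <;>
        push_cast <;> ring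
    -- key summation identity
    have hsum : ((cX G x y : ℕ):ℝ) * (∑ v ∈ S, g v) - ((cY G x y : ℕ):ℝ) * (∑ w ∈ T, g w)
        = (∑ u ∈ U, (((muX G x y u : ℤ):ℝ) - ((muY G x y u : ℤ):ℝ)) * g u)
          + ((cY G x y : ℕ):ℝ) := by
      have e1 : ∑ u ∈ U, (if u ∈ S then ((cX G x y : ℕ):ℝ) * g u else 0)
          = ((cX G x y : ℕ):ℝ) * ∑ v ∈ S, g v := by
        rw [Finset.sum_ite_mem, Finset.inter_eq_right.mpr Finset.subset_union_left,
          Finset.mul_sum]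
      have e2 : ∑ u ∈ U, (if u ∈ T then ((cY G x y : ℕ):ℝ) * g u else 0)
          = ((cY G x y : ℕ):ℝ) * ∑ w ∈ T, g w := by
        rw [Finset.sum_ite_mem, Finset.inter_eq_right.mpr Finset.subset_union_right,
          Finset.mul_sum]
      have e3 : ∀ u ∈ U, (if u ∈ S then ((cX G x y : ℕ):ℝ) * g u else 0)
          - (if u ∈ T then ((cY G x y : ℕ):ℝ) * g u else 0)
          = (((muX G x y u : ℤ):ℝ) - ((muY G x y u : ℤ):ℝ)) * g u
            + (if u = y then ((cY G x y : ℕ):ℝ) * g u else 0)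
            - (if u = x then ((cY G x y : ℕ):ℝ) * g u else 0) := by
        intro u _
        have h := congrArg (fun t => t * g u) (ptwise u)
        simp only [sub_mul, add_mul, ite_mul, zero_mul] at h
        linarith [h]
      have e4 : ∑ u ∈ U, (if u = y then ((cY G x y : ℕ):ℝ) * g u else 0)
          = ((cY G x y : ℕ):ℝ) * g y := by
        rw [Finset.sum_ite_eq' U y (fun u => ((cY G x y : ℕ):ℝ) * g u), if_pos hyU]
      have e5 : ∑ u ∈ U, (if u = x then ((cY G x y : ℕ):ℝ) * g u else 0)
          = ((cY G x y : ℕ):ℝ) * g x := by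
        rw [Finset.sum_ite_eq' U x (fun u => ((cY G x y : ℕ):ℝ) * g u), if_pos hxU]
      calc ((cX G x y : ℕ):ℝ) * (∑ v ∈ S, g v) - ((cY G x y : ℕ):ℝ) * (∑ w ∈ T, g w)
          = ∑ u ∈ U, ((if u ∈ S then ((cX G x y : ℕ):ℝ) * g u else 0)
              - (if u ∈ T then ((cY G x y : ℕ):ℝ) * g u else 0)) := by
            rw [← e1, ← e2]
            exact (Finset.sum_sub_distrib ..).symm
        _ = ∑ u ∈ U, ((((muX G x y u : ℤ):ℝ) - ((muY G x y u : ℤ):ℝ)) * g u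
              + (if u = y then ((cY G x y : ℕ):ℝ) * g u else 0)
              - (if u = x then ((cY G x y : ℕ):ℝ) * g u else 0)) :=
            Finset.sum_congr rfl e3
        _ = (∑ u ∈ U, (((muX G x y u : ℤ):ℝ) - ((muY G x y u : ℤ):ℝ)) * g u)
              + (∑ u ∈ U, (if u = y then ((cY G x y : ℕ):ℝ) * g u else 0))
              - (∑ u ∈ U, (if u = x then ((cY G x y : ℕ):ℝ) * g u else 0)) := by
            rw [Finset.sum_sub_distrib, Finset.sum_add_distrib]
        _ = (∑ u ∈ U, (((muX G x y u : ℤ):ℝ) - ((muY G x y u : ℤ):ℝ)) * g u)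
              + ((cY G x y : ℕ):ℝ) := by
            rw [e4, e5, hgy, hgx]; ring
    -- the coupling / transport estimate
    set F : Finset (V × V) := hσfin.toFinset with hFdef
    set F1 : Finset V := F.image Prod.fst with hF1def
    set F2 : Finset V := F.image Prod.snd with hF2def
    have hσ0 : ∀ p : V × V, p ∉ F → σ p = 0 := by
      intro p hp
      by_contra h
      exact hp (hσfin.mem_toFinset.mpr h)
    have hXz : ∀ u, muX G x y u = ∑ v ∈ F2, σ (u, v) := by
      intro u
      rw [← hσX u]
      apply finsum_eq_finset_sum_of_support_subset
      intro v hv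
      simp only [Function.mem_support] at hv
      exact Finset.mem_coe.mpr (Finset.mem_image.mpr ⟨(u, v), hσfin.mem_toFinset.mpr hv, rfl⟩)
    have hYz : ∀ z, muY G x y z = ∑ u ∈ F1, σ (u, z) := by
      intro z
      rw [← hσY z]
      apply finsum_eq_finset_sum_of_support_subset
      intro u hu
      simp only [Function.mem_support] at hu
      exact Finset.mem_coe.mpr (Finset.mem_image.mpr ⟨(u, z), hσfin.mem_toFinset.mpr hu, rfl⟩)
    have hXvan : ∀ u, u ∉ F1 → muX G x y u = 0 := by
      intro u hu
      rw [hXz u]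
      apply Finset.sum_eq_zero
      intro v _
      exact hσ0 (u, v) (fun hm => hu (Finset.mem_image.mpr ⟨(u, v), hm, rfl⟩))
    have hYvan : ∀ z, z ∉ F2 → muY G x y z = 0 := by
      intro z hz
      rw [hYz z]
      apply Finset.sum_eq_zero
      intro u _
      exact hσ0 (u, z) (fun hm => hz (Finset.mem_image.mpr ⟨(u, z), hm, rfl⟩))
    have hXsupp : ∀ u, u ∉ U → muX G x y u = 0 := by
      intro u hu
      have hu1 : u ∉ G.neighborSet x := fun h => hu (Finset.mem_union_left _ ((hmemS u).mpr h))
      have hu2 : ¬ (u = y) := fun h => hu (h ▸ Finset.mem_union_left _ ((hmemS y).mpr hyNx))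
      simp [muX, hu1, hu2]
    have hYsupp : ∀ u, u ∉ U → muY G x y u = 0 := by
      intro u hu
      have hu1 : u ∉ G.neighborSet y := fun h => hu (Finset.mem_union_right _ ((hmemT u).mpr h))
      simp [muY, hu1]
    -- transfer sums over U to sums over F1 / F2
    have hXtrans : ∑ u ∈ U, ((muX G x y u : ℤ):ℝ) * g u
        = ∑ u ∈ F1, ((muX G x y u : ℤ):ℝ) * g u := by
      have a1 : ∑ u ∈ U, ((muX G x y u : ℤ):ℝ) * g u
          = ∑ u ∈ U ∪ F1, ((muX G x y u : ℤ):ℝ) * g u :=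
        Finset.sum_subset Finset.subset_union_left
          (fun u _ hu => by rw [hXsupp u hu]; simp)
      have a2 : ∑ u ∈ F1, ((muX G x y u : ℤ):ℝ) * g u
          = ∑ u ∈ U ∪ F1, ((muX G x y u : ℤ):ℝ) * g u :=
        Finset.sum_subset Finset.subset_union_right
          (fun u _ hu => by rw [hXvan u hu]; simp)
      rw [a1, ← a2]
    have hYtrans : ∑ u ∈ U, ((muY G x y u : ℤ):ℝ) * g u
        = ∑ u ∈ F2, ((muY G x y u : ℤ):ℝ) * g u := by
      have a1 : ∑ u ∈ U, ((muY G x y u : ℤ):ℝ) * g u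
          = ∑ u ∈ U ∪ F2, ((muY G x y u : ℤ):ℝ) * g u :=
        Finset.sum_subset Finset.subset_union_left
          (fun u _ hu => by rw [hYsupp u hu]; simp)
      have a2 : ∑ u ∈ F2, ((muY G x y u : ℤ):ℝ) * g u
          = ∑ u ∈ U ∪ F2, ((muY G x y u : ℤ):ℝ) * g u :=
        Finset.sum_subset Finset.subset_union_right
          (fun u _ hu => by rw [hYvan u hu]; simp)
      rw [a1, ← a2]
    have hXP : ∑ u ∈ F1, ((muX G x y u : ℤ):ℝ) * g u
        = ∑ p ∈ F1 ×ˢ F2, ((σ p : ℤ):ℝ) * g p.1 := by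
      rw [Finset.sum_product]
      apply Finset.sum_congr rfl
      intro u _
      rw [hXz u]
      push_cast
      rw [Finset.sum_mul]
    have hYP : ∑ u ∈ F2, ((muY G x y u : ℤ):ℝ) * g u
        = ∑ p ∈ F1 ×ˢ F2, ((σ p : ℤ):ℝ) * g p.2 := by
      rw [Finset.sum_product]
      rw [Finset.sum_comm]
      apply Finset.sum_congr rfl
      intro z _
      rw [hYz z]
      push_cast
      rw [Finset.sum_mul]
    have hcost : cost G σ = ∑ p ∈ F1 ×ˢ F2, ((σ p : ℤ):ℝ) * (G.dist p.1 p.2 : ℝ) := by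
      rw [cost]
      apply finsum_eq_finset_sum_of_support_subset
      intro p hp
      have hσp : σ p ≠ 0 := by
        intro h
        simp only [Function.mem_support, h] at hp
        exact hp (by push_cast; ring)
      have hpF : p ∈ F := hσfin.mem_toFinset.mpr hσp
      exact Finset.mem_coe.mpr (Finset.mem_product.mpr
        ⟨Finset.mem_image.mpr ⟨p, hpF, rfl⟩, Finset.mem_image.mpr ⟨p, hpF, rfl⟩⟩)
    have hbound : -(cost G σ) ≤ ∑ u ∈ U, (((muX G x y u : ℤ):ℝ) - ((muY G x y u : ℤ):ℝ)) * g u := by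
      have e : ∑ u ∈ U, (((muX G x y u : ℤ):ℝ) - ((muY G x y u : ℤ):ℝ)) * g u
          = ∑ p ∈ F1 ×ˢ F2, ((σ p : ℤ):ℝ) * (f p.1 - f p.2) := by
        have e0 : ∀ u ∈ U, (((muX G x y u : ℤ):ℝ) - ((muY G x y u : ℤ):ℝ)) * g u
            = ((muX G x y u : ℤ):ℝ) * g u - ((muY G x y u : ℤ):ℝ) * g u := by
          intro u _; ring
        rw [Finset.sum_congr rfl e0, Finset.sum_sub_distrib, hXtrans, hYtrans, hXP, hYP,
          ← Finset.sum_sub_distrib]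
        apply Finset.sum_congr rfl
        intro p _
        rw [hgv p.1, hgv p.2]
        ring
      rw [e, hcost, ← Finset.sum_neg_distrib]
      apply Finset.sum_le_sum
      intro p _
      have h1 : -(G.dist p.1 p.2 : ℝ) ≤ f p.1 - f p.2 := (abs_le.mp (hf p.1 p.2)).1
      have h2 : (0:ℝ) ≤ ((σ p : ℤ):ℝ) := by exact_mod_cast hσpos p
      nlinarith [mul_le_mul_of_nonneg_left h1 h2]
    -- assemble the key inequality
    have key : (L:ℝ) + ((cY G x y : ℕ):ℝ) - cost G σ ≤ (L:ℝ) * (lap G f x - lap G f y) := by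
      have hLx : (L:ℝ) * lap G f x
          = ((cX G x y : ℕ):ℝ) * ∑ v ∈ S, (f v - f x) := by
        rw [hlapx, ← hcxR]
        field_simp
      have hLy : (L:ℝ) * lap G f y
          = ((cY G x y : ℕ):ℝ) * ∑ v ∈ T, (f v - f y) := by
        rw [hlapy, ← hcyR]
        field_simp
      have hsplit : ∑ v ∈ S, (f v - f x) = (∑ v ∈ S, g v) + (S.card : ℝ) := by
        have : ∀ v ∈ S, f v - f x = g v + 1 := by
          intro v _; rw [hgv]; linarith
        rw [Finset.sum_congr rfl this, Finset.sum_add_distrib, Finset.sum_const,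
          nsmul_eq_mul, mul_one]
      have hTg : ∑ v ∈ T, (f v - f y) = ∑ w ∈ T, g w := by
        apply Finset.sum_congr rfl
        intro w _; rw [hgv]
      have hcard : ((cX G x y : ℕ):ℝ) * (S.card : ℝ) = (L:ℝ) := by
        rw [← hcxR, hdxS]
      calc (L:ℝ) + ((cY G x y : ℕ):ℝ) - cost G σ
          ≤ (L:ℝ) + ((cY G x y : ℕ):ℝ)
            + ∑ u ∈ U, (((muX G x y u : ℤ):ℝ) - ((muY G x y u : ℤ):ℝ)) * g u := by
            linarith [hbound]
        _ = (L:ℝ) + (((cX G x y : ℕ):ℝ) * (∑ v ∈ S, g v)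
              - ((cY G x y : ℕ):ℝ) * (∑ w ∈ T, g w)) := by rw [hsum]; ring
        _ = (L:ℝ) * (lap G f x - lap G f y) := by
            rw [mul_sub, hLx, hLy, hsplit, hTg, mul_add, hcard]
            ring
    -- conclude
    have hfrac : 1 / ((deg G y : ℕ):ℝ) = ((cY G x y : ℕ):ℝ) / (L:ℝ) := by
      rw [div_eq_div_iff hdyR hL0R.ne']
      linarith [hcyR]
    rw [hfrac]
    have expand : 1 + ((cY G x y : ℕ):ℝ) / (L:ℝ) - cost G σ / (L:ℝ)
        = ((L:ℝ) + ((cY G x y : ℕ):ℝ) - cost G σ) / (L:ℝ) := by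
      field_simp
    rw [expand, div_le_iff₀ hL0R]
    nlinarith [key]
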